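/- arXiv:1206.4951 — 2 statements merged into one kernel-verified Lean document; each statement's English description precedes it below -/
import Mathlib

section
/- For every n ≥ 1 and k ≥ 1, the number of families α with D(α) of rank 0 is Γ_0(n,k) = 1; and for every n ≥ 1 and k ≥ 2, the number of families α with D(α) of rank 1 is Γ_1(n,k) = 3·(2^n − 1). -/
open Matrix Submodule Module

/-- The `2n × k` n-fold persymmetric matrix over `F₂` built from the family `α`:
the entry at block `j`, row `r ∈ Fin 2`, column `c ∈ Fin k` is `α j (r + c)`. -/
def persymD (n k : ℕ) (α : Fin n → Fin (k + 1) → ZMod 2) :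
    Matrix (Fin n × Fin 2) (Fin k) (ZMod 2) :=
  fun p c => α p.1 ⟨p.2.val + c.val, by have h1 := p.2.isLt; have h2 := c.isLt; omega⟩

/-- `Γ n k i` counts the families `α : Fin n → Fin (k+1) → F₂` whose associated
n-fold persymmetric matrix has rank `i`. -/
noncomputable def Gamma (n k i : ℕ) : ℕ :=
  Nat.card {α : Fin n → Fin (k + 1) → ZMod 2 // (persymD n k α).rank = i}

lemma rank_one_of_rows {m' k' : Type*} [Fintype m'] [Fintype k']
    (A : Matrix m' k' (ZMod 2)) (v : k' → ZMod 2) (hv : v ≠ 0)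
    (hrows : ∀ p, A p = 0 ∨ A p = v) (hA : A ≠ 0) : A.rank = 1 := by
  rw [A.rank_eq_finrank_span_row]
  have hvmem : v ∈ Set.range A := by
    obtain ⟨p, hp⟩ : ∃ p, A p ≠ 0 := by
      by_contra h; push_neg at h; exact hA (funext h)
    rcases hrows p with h | h
    · exact absurd h hp
    · exact ⟨p, h⟩
  have hspan : Submodule.span (ZMod 2) (Set.range A) = Submodule.span (ZMod 2) {v} := by
    apply le_antisymm
    · rw [Submodule.span_le]
      rintro _ ⟨p, rfl⟩
      rcases hrows p with h | h <;> rw [h]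
      · exact zero_mem _
      · exact subset_span rfl
    · exact span_mono (Set.singleton_subset_iff.mpr hvmem)
  rw [show Set.range A.row = Set.range A from rfl, hspan]
  exact finrank_span_singleton hv

lemma zmod2_add_eq_zero {a b : ZMod 2} (h : a + b = 0) : a = b := by revert a b; decide

lemma zmod2_ne_zero {a : ZMod 2} (h : a ≠ 0) : a = 1 := by revert a; decide

lemma two_le_rank_of_rows {m' k' : Type*} [Fintype m'] [Fintype k']
    (A : Matrix m' k' (ZMod 2)) (p q : m') (hp : A p ≠ 0) (hq : A q ≠ 0) (hpq : A p ≠ A q) :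
    2 ≤ A.rank := by
  rw [A.rank_eq_finrank_span_row]
  have hli : LinearIndependent (ZMod 2) ![A p, A q] := by
    rw [LinearIndependent.pair_iff]
    intro s t hst
    obtain rfl | rfl : s = 0 ∨ s = 1 := (fun x : ZMod 2 => by revert x; decide : ∀ x : ZMod 2, x = 0 ∨ x = 1) s
    all_goals obtain rfl | rfl : t = 0 ∨ t = 1 := (fun x : ZMod 2 => by revert x; decide : ∀ x : ZMod 2, x = 0 ∨ x = 1) t
    all_goals simp_all <;>
      first
        | exact hp hst
        | exact hq hst
        | exact hpq (funext fun c => zmod2_add_eq_zero (congrFun hst c))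
  have h2 : finrank (ZMod 2) (span (ZMod 2) (Set.range ![A p, A q])) = 2 := by
    rw [finrank_span_eq_card hli]; simp
  calc (2:ℕ) = _ := h2.symm
    _ ≤ _ := Submodule.finrank_mono (span_mono (by
        rintro _ ⟨i, rfl⟩; fin_cases i <;> exact ⟨_, rfl⟩))

lemma rank_zero_iff_rows {m' k' : Type*} [Fintype m'] [Fintype k']
    (A : Matrix m' k' (ZMod 2)) : A.rank = 0 ↔ A = 0 := by
  constructor
  · intro h
    rw [A.rank_eq_finrank_span_row] at h
    have := Submodule.finrank_eq_zero.mp h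
    rw [span_eq_bot] at this
    exact funext fun p => this (A p) ⟨p, rfl⟩
  · rintro rfl; exact rank_zero

/-- The three rank-one block patterns. -/
def w1 (k : ℕ) : Fin (k+1) → ZMod 2 := fun m => if m.val = 0 then 1 else 0
def w2 (k : ℕ) : Fin (k+1) → ZMod 2 := fun _ => 1
def w3 (k : ℕ) : Fin (k+1) → ZMod 2 := fun m => if m.val = k then 1 else 0

lemma persymD_entry {n k : ℕ} (α : Fin n → Fin (k+1) → ZMod 2) (j : Fin n) (r : Fin 2)
    (c : Fin k) (m : Fin (k+1)) (h : r.val + c.val = m.val) :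
    persymD n k α (j, r) c = α j m :=
  congrArg (α j)
    (Fin.ext (a := ⟨r.val + c.val, by have := r.isLt; have := c.isLt; omega⟩) (b := m) h)

lemma persymD_eq_zero_iff {n k : ℕ} (hk : 1 ≤ k) (α : Fin n → Fin (k+1) → ZMod 2) :
    persymD n k α = 0 ↔ α = 0 := by
  constructor
  · intro h
    funext j m
    by_cases hm : m.val < k
    · have := congrFun (congrFun h (j, 0)) ⟨m.val, hm⟩
      rw [persymD_entry α j 0 ⟨m.val, hm⟩ m (by simp)] at this
      exact this
    · have hmk : m.val = k := by have := m.isLt; omega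
      have := congrFun (congrFun h (j, 1)) ⟨m.val - 1, by omega⟩
      rw [persymD_entry α j 1 ⟨m.val - 1, by omega⟩ m (by simp; omega)] at this
      exact this
  · rintro rfl
    funext p c
    simp [persymD]

lemma fin2_zero_or_one (r : Fin 2) : r = 0 ∨ r = 1 := by revert r; decide

lemma rank_one_iff {n k : ℕ} (hk : 2 ≤ k) (α : Fin n → Fin (k+1) → ZMod 2) :
    (persymD n k α).rank = 1 ↔ α ≠ 0 ∧
      ((∀ j, α j = 0 ∨ α j = w1 k) ∨ (∀ j, α j = 0 ∨ α j = w2 k) ∨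
        (∀ j, α j = 0 ∨ α j = w3 k)) := by
  constructor
  · intro h
    have hα : α ≠ 0 := by
      intro h0
      rw [(persymD_eq_zero_iff (by omega) α).mpr h0, Matrix.rank_zero] at h
      omega
    have H : ∀ p q, persymD n k α p = 0 ∨ persymD n k α q = 0 ∨
        persymD n k α p = persymD n k α q := by
      intro p q
      by_contra hc
      push_neg at hc
      have := two_le_rank_of_rows _ p q hc.1 hc.2.1 hc.2.2
      omega
    have hclass : ∀ j, α j = 0 ∨ α j = w1 k ∨ α j = w2 k ∨ α j = w3 k := by
      intro j
      by_cases h0 : persymD n k α (j, 0) = 0 <;>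
        by_cases h1 : persymD n k α (j, 1) = 0
      · -- both rows zero
        left
        funext m
        by_cases hm : m.val < k
        · have := congrFun h0 ⟨m.val, hm⟩
          rw [persymD_entry α j 0 ⟨m.val, hm⟩ m (by simp)] at this
          exact this
        · have := congrFun h1 ⟨m.val - 1, by omega⟩
          rw [persymD_entry α j 1 ⟨m.val - 1, by omega⟩ m (by simp; have := m.isLt; omega)] at this
          exact this
      · -- row0 zero, row1 nonzero : w3
        right; right; right
        have hz : ∀ m : Fin (k+1), m.val < k → α j m = 0 := by
          intro m hm
          have := congrFun h0 ⟨m.val, hm⟩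
          rw [persymD_entry α j 0 ⟨m.val, hm⟩ m (by simp)] at this
          exact this
        obtain ⟨c, hc⟩ : ∃ c, persymD n k α (j, 1) c ≠ 0 := by
          by_contra hcc; push_neg at hcc; exact h1 (funext hcc)
        rw [persymD_entry α j 1 c ⟨1 + c.val, by have := c.isLt; omega⟩ (by simp)] at hc
        have hck : 1 + c.val = k := by
          by_contra hne
          exact hc (hz ⟨1 + c.val, by have := c.isLt; omega⟩ (show 1 + c.val < k by have := c.isLt; omega))
        funext m
        by_cases hm : m.val = k
        · have : α j m ≠ 0 := by
            intro h0'
            exact hc (by rw [show (⟨1 + c.val, by omega⟩ : Fin (k+1)) = m from Fin.ext (show 1 + c.val = m.val by omega)]; exact h0')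
          rw [zmod2_ne_zero this]
          simp [w3, hm]
        · rw [hz m (by have := m.isLt; omega)]
          simp [w3, hm]
      · -- row1 zero, row0 nonzero : w1
        right; left
        have hz : ∀ m : Fin (k+1), 1 ≤ m.val → α j m = 0 := by
          intro m hm
          have := congrFun h1 ⟨m.val - 1, by have := m.isLt; omega⟩
          rw [persymD_entry α j 1 ⟨m.val - 1, by have := m.isLt; omega⟩ m (by simp; omega)] at this
          exact this
        obtain ⟨c, hc⟩ : ∃ c, persymD n k α (j, 0) c ≠ 0 := by
          by_contra hcc; push_neg at hcc; exact h0 (funext hcc)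
        rw [persymD_entry α j 0 c ⟨c.val, by have := c.isLt; omega⟩ (by simp)] at hc
        have hc0 : c.val = 0 := by
          by_contra hne
          exact hc (hz ⟨c.val, by have := c.isLt; omega⟩ (show 1 ≤ c.val by omega))
        funext m
        by_cases hm : m.val = 0
        · have : α j m ≠ 0 := by
            intro h0'
            exact hc (by rw [show (⟨c.val, by omega⟩ : Fin (k+1)) = m from Fin.ext (show c.val = m.val by omega)]; exact h0')
          rw [zmod2_ne_zero this]
          simp [w1, hm]
        · rw [hz m (by omega)]
          simp [w1, hm]
      · -- both rows nonzero : equal rows, constant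
        have heq : persymD n k α (j, 0) = persymD n k α (j, 1) := by
          rcases H (j, 0) (j, 1) with h' | h' | h'
          · exact absurd h' h0
          · exact absurd h' h1
          · exact h'
        have step : ∀ i (hi : i < k),
            α j ⟨i, by omega⟩ = α j ⟨i + 1, by omega⟩ := by
          intro i hi
          have := congrFun heq ⟨i, hi⟩
          rw [persymD_entry α j 0 ⟨i, hi⟩ ⟨i, by omega⟩ (by simp),
              persymD_entry α j 1 ⟨i, hi⟩ ⟨i + 1, by omega⟩ (by simp; omega)] at this
          exact this
        have hall : ∀ i (hi : i < k + 1), α j ⟨i, hi⟩ = α j ⟨0, by omega⟩ := by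
          intro i
          induction i with
          | zero => intro hi; rfl
          | succ i ih =>
            intro hi
            exact (step i (by omega)).symm.trans (ih (by omega))
        by_cases hv : α j ⟨0, by omega⟩ = 0
        · left
          funext m
          have := hall m.val m.isLt
          rw [show (⟨m.val, m.isLt⟩ : Fin (k+1)) = m from rfl] at this
          rw [this, hv]
          rfl
        · right; right; left
          funext m
          have := hall m.val m.isLt
          rw [show (⟨m.val, m.isLt⟩ : Fin (k+1)) = m from rfl] at this
          rw [this, zmod2_ne_zero hv]
          rfl
    -- cross exclusions
    have hex12 : ∀ j j', α j = w1 k → α j' = w2 k → False := by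
      intro j j' hj hj'
      rcases H (j, 0) (j', 0) with h' | h' | h'
      · have := congrFun h' ⟨0, by omega⟩
        rw [persymD_entry α j 0 ⟨0, by omega⟩ ⟨0, by omega⟩ (by simp), hj] at this
        simp [w1] at this
      · have := congrFun h' ⟨0, by omega⟩
        rw [persymD_entry α j' 0 ⟨0, by omega⟩ ⟨0, by omega⟩ (by simp), hj'] at this
        simp [w2] at this
      · have := congrFun h' ⟨1, by omega⟩
        rw [persymD_entry α j 0 ⟨1, by omega⟩ ⟨1, by omega⟩ (by simp),
            persymD_entry α j' 0 ⟨1, by omega⟩ ⟨1, by omega⟩ (by simp), hj, hj'] at this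
        simp [w1, w2] at this
    have hex13 : ∀ j j', α j = w1 k → α j' = w3 k → False := by
      intro j j' hj hj'
      rcases H (j, 0) (j', 1) with h' | h' | h'
      · have := congrFun h' ⟨0, by omega⟩
        rw [persymD_entry α j 0 ⟨0, by omega⟩ ⟨0, by omega⟩ (by simp), hj] at this
        simp [w1] at this
      · have := congrFun h' ⟨k - 1, by omega⟩
        rw [persymD_entry α j' 1 ⟨k - 1, by omega⟩ ⟨k, by omega⟩ (by simp; omega), hj'] at this
        simp [w3] at this
      · have := congrFun h' ⟨0, by omega⟩
        rw [persymD_entry α j 0 ⟨0, by omega⟩ ⟨0, by omega⟩ (by simp),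
            persymD_entry α j' 1 ⟨0, by omega⟩ ⟨1, by omega⟩ (by simp), hj, hj'] at this
        simp only [w1, w3] at this
        rw [if_pos trivial, if_neg (by omega)] at this
        exact one_ne_zero this
    have hex23 : ∀ j j', α j = w2 k → α j' = w3 k → False := by
      intro j j' hj hj'
      rcases H (j, 0) (j', 1) with h' | h' | h'
      · have := congrFun h' ⟨0, by omega⟩
        rw [persymD_entry α j 0 ⟨0, by omega⟩ ⟨0, by omega⟩ (by simp), hj] at this
        simp [w2] at this
      · have := congrFun h' ⟨k - 1, by omega⟩
        rw [persymD_entry α j' 1 ⟨k - 1, by omega⟩ ⟨k, by omega⟩ (by simp; omega), hj'] at this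
        simp [w3] at this
      · have := congrFun h' ⟨0, by omega⟩
        rw [persymD_entry α j 0 ⟨0, by omega⟩ ⟨0, by omega⟩ (by simp),
            persymD_entry α j' 1 ⟨0, by omega⟩ ⟨1, by omega⟩ (by simp), hj, hj'] at this
        simp only [w2, w3] at this
        rw [if_neg (by omega)] at this
        exact one_ne_zero this
    refine ⟨hα, ?_⟩
    by_cases e1 : ∃ j, α j = w1 k
    · obtain ⟨j1, hj1⟩ := e1
      left
      intro j
      rcases hclass j with h' | h' | h' | h'
      · exact Or.inl h'
      · exact Or.inr h'
      · exact (hex12 j1 j hj1 h').elim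
      · exact (hex13 j1 j hj1 h').elim
    · by_cases e2 : ∃ j, α j = w2 k
      · obtain ⟨j2, hj2⟩ := e2
        right; left
        intro j
        rcases hclass j with h' | h' | h' | h'
        · exact Or.inl h'
        · exact (e1 ⟨j, h'⟩).elim
        · exact Or.inr h'
        · exact (hex23 j2 j hj2 h').elim
      · right; right
        intro j
        rcases hclass j with h' | h' | h' | h'
        · exact Or.inl h'
        · exact (e1 ⟨j, h'⟩).elim
        · exact (e2 ⟨j, h'⟩).elim
        · exact Or.inr h'
  · rintro ⟨hα, hcase⟩
    have hA : persymD n k α ≠ 0 := fun h0 => hα ((persymD_eq_zero_iff (by omega) α).mp h0)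
    rcases hcase with hc | hc | hc
    · refine rank_one_of_rows _ (fun c => if c.val = 0 then 1 else 0) ?_ ?_ hA
      · intro h'
        have := congrFun h' ⟨0, by omega⟩
        simp at this
      · rintro ⟨j, r⟩
        rcases hc j with h' | h'
        · left; funext c
          rw [persymD_entry α j r c ⟨r.val + c.val, by have := r.isLt; have := c.isLt; omega⟩ rfl, h']
          rfl
        · rcases fin2_zero_or_one r with rfl | rfl
          · right; funext c
            rw [persymD_entry α j 0 c ⟨c.val, by have := c.isLt; omega⟩ (by simp), h']
            simp [w1]
          · left; funext c
            rw [persymD_entry α j 1 c ⟨1 + c.val, by have := c.isLt; omega⟩ (by simp), h']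
            simp [w1]
    · refine rank_one_of_rows _ (fun _ => 1) ?_ ?_ hA
      · intro h'
        have := congrFun h' ⟨0, by omega⟩
        simp at this
      · rintro ⟨j, r⟩
        rcases hc j with h' | h'
        · left; funext c
          rw [persymD_entry α j r c ⟨r.val + c.val, by have := r.isLt; have := c.isLt; omega⟩ rfl, h']
          rfl
        · right; funext c
          rw [persymD_entry α j r c ⟨r.val + c.val, by have := r.isLt; have := c.isLt; omega⟩ rfl, h']
          rfl
    · refine rank_one_of_rows _ (fun c => if c.val + 1 = k then 1 else 0) ?_ ?_ hA
      · intro h'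
        have := congrFun h' ⟨k - 1, by omega⟩
        rw [if_pos (by simp; omega)] at this
        exact one_ne_zero this
      · rintro ⟨j, r⟩
        rcases hc j with h' | h'
        · left; funext c
          rw [persymD_entry α j r c ⟨r.val + c.val, by have := r.isLt; have := c.isLt; omega⟩ rfl, h']
          rfl
        · rcases fin2_zero_or_one r with rfl | rfl
          · left; funext c
            rw [persymD_entry α j 0 c ⟨c.val, by have := c.isLt; omega⟩ (by simp), h']
            simp only [w3]
            rw [if_neg (by have := c.isLt; omega)]
            rfl
          · right; funext c
            rw [persymD_entry α j 1 c ⟨1 + c.val, by have := c.isLt; omega⟩ (by simp), h']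
            simp only [w3]
            split_ifs <;> first | rfl | omega

lemma w1_ne_zero (k : ℕ) : w1 k ≠ 0 := by
  intro h
  have := congrFun h ⟨0, by omega⟩
  simp [w1] at this

lemma w2_ne_zero (k : ℕ) : w2 k ≠ 0 := by
  intro h
  have := congrFun h ⟨0, by omega⟩
  simp [w2] at this

lemma w3_ne_zero (k : ℕ) : w3 k ≠ 0 := by
  intro h
  have := congrFun h ⟨k, by omega⟩
  simp [w3] at this

lemma w1_ne_w2 {k : ℕ} (hk : 1 ≤ k) : w1 k ≠ w2 k := by
  intro h
  have := congrFun h ⟨1, by omega⟩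
  simp [w1, w2] at this

lemma w1_ne_w3 {k : ℕ} (hk : 1 ≤ k) : w1 k ≠ w3 k := by
  intro h
  have := congrFun h ⟨0, by omega⟩
  simp only [w1, w3] at this
  rw [if_pos trivial, if_neg (by omega)] at this
  exact one_ne_zero this

lemma w2_ne_w3 {k : ℕ} (hk : 1 ≤ k) : w2 k ≠ w3 k := by
  intro h
  have := congrFun h ⟨0, by omega⟩
  simp only [w2, w3] at this
  rw [if_neg (by omega)] at this
  exact one_ne_zero this

lemma cardAux {n k : ℕ} (w : Fin (k+1) → ZMod 2) (hw : w ≠ 0) :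
    (Finset.univ.filter
      (fun α : Fin n → Fin (k+1) → ZMod 2 => α ≠ 0 ∧ ∀ j, α j = 0 ∨ α j = w)).card
      = 2 ^ n - 1 := by
  have h1 : Finset.univ.filter
      (fun α : Fin n → Fin (k+1) → ZMod 2 => α ≠ 0 ∧ ∀ j, α j = 0 ∨ α j = w)
      = (Finset.univ.filter
          (fun α : Fin n → Fin (k+1) → ZMod 2 => ∀ j, α j = 0 ∨ α j = w)).erase 0 := by
    ext α
    simp [Finset.mem_erase, Finset.mem_filter, and_comm]
  rw [h1, Finset.card_erase_of_mem (by simp)]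
  congr 1
  have h2 : Finset.univ.filter
      (fun α : Fin n → Fin (k+1) → ZMod 2 => ∀ j, α j = 0 ∨ α j = w)
      = Fintype.piFinset (fun _ : Fin n => ({0, w} : Finset (Fin (k+1) → ZMod 2))) := by
    ext α
    simp [Fintype.mem_piFinset]
  rw [h2, Fintype.card_piFinset]
  simp [Finset.card_pair (Ne.symm hw)]

lemma disjAux {n k : ℕ} (w w' : Fin (k+1) → ZMod 2) (hww' : w ≠ w') :
    Disjoint
      (Finset.univ.filter
        (fun α : Fin n → Fin (k+1) → ZMod 2 => α ≠ 0 ∧ ∀ j, α j = 0 ∨ α j = w))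
      (Finset.univ.filter
        (fun α : Fin n → Fin (k+1) → ZMod 2 => α ≠ 0 ∧ ∀ j, α j = 0 ∨ α j = w')) := by
  rw [Finset.disjoint_left]
  intro α h h'
  rw [Finset.mem_filter] at h h'
  obtain ⟨-, hα, hj⟩ := h
  obtain ⟨-, -, hj'⟩ := h'
  refine hα (funext fun j => ?_)
  rcases hj j with h | h
  · exact h
  · rcases hj' j with h' | h'
    · exact h'
    · exact (hww' (h.symm.trans h')).elim

theorem gamma_rank_zero_one (n k : ℕ) (hn : 1 ≤ n) :
    (1 ≤ k → Gamma n k 0 = 1) ∧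
    (2 ≤ k → (Gamma n k 1 : ℤ) = 3 * (2 ^ n - 1)) := by
  constructor
  · intro hk
    rw [Gamma,
      Nat.card_congr (Equiv.subtypeEquivRight
        (fun α => (rank_zero_iff_rows _).trans (persymD_eq_zero_iff hk α))),
      Nat.card_eq_fintype_card, Fintype.card_subtype_eq]
  · intro hk
    have hnat : Gamma n k 1 = 3 * (2 ^ n - 1) := by
      rw [Gamma,
        Nat.card_congr (Equiv.subtypeEquivRight (fun α => rank_one_iff hk α)),
        Nat.card_eq_fintype_card, Fintype.card_subtype]
      have hsplit : Finset.univ.filter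
          (fun α : Fin n → Fin (k+1) → ZMod 2 => α ≠ 0 ∧
            ((∀ j, α j = 0 ∨ α j = w1 k) ∨ (∀ j, α j = 0 ∨ α j = w2 k) ∨
              (∀ j, α j = 0 ∨ α j = w3 k)))
          = (Finset.univ.filter
              (fun α : Fin n → Fin (k+1) → ZMod 2 => α ≠ 0 ∧ ∀ j, α j = 0 ∨ α j = w1 k)
            ∪ Finset.univ.filter
              (fun α : Fin n → Fin (k+1) → ZMod 2 => α ≠ 0 ∧ ∀ j, α j = 0 ∨ α j = w2 k))
            ∪ Finset.univ.filter
              (fun α : Fin n → Fin (k+1) → ZMod 2 => α ≠ 0 ∧ ∀ j, α j = 0 ∨ α j = w3 k) := by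
        ext α
        simp only [Finset.mem_filter, Finset.mem_union, Finset.mem_univ, true_and]
        tauto
      rw [hsplit,
        Finset.card_union_of_disjoint (by
          rw [Finset.disjoint_union_left]
          exact ⟨disjAux _ _ (w1_ne_w3 (by omega)), disjAux _ _ (w2_ne_w3 (by omega))⟩),
        Finset.card_union_of_disjoint (disjAux _ _ (w1_ne_w2 (by omega))),
        cardAux _ (w1_ne_zero k), cardAux _ (w2_ne_zero k), cardAux _ (w3_ne_zero k)]
      have h2n : 1 ≤ 2 ^ n := Nat.one_le_two_pow
      omega
    rw [hnat]
    have h2n : 1 ≤ 2 ^ n := Nat.one_le_two_pow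
    push_cast [h2n]
    ring
end

section
/- For every n ≥ 1 and k ≥ 1, the following identity holds in the rational numbers: Σ_{i=0}^{min(2n,k)} Γ_i(n,k)·2^{−i} = 2^{n + k(n−1)} + 2^{(k−1)n} − 2^{(k−1)n}·2^{−k}. -/
open Finset Module

/-- The linear map sending `β : Fin (k+1) → F₂` to the pair of dot products of the two
rows of its `2 × k` Hankel block with a fixed vector `x`. -/
noncomputable def phiL (k : ℕ) (x : Fin k → ZMod 2) :
    (Fin (k + 1) → ZMod 2) →ₗ[ZMod 2] (Fin 2 → ZMod 2) where
  toFun β := fun r => ∑ c : Fin k,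
    β ⟨r.val + c.val, by have := r.isLt; have := c.isLt; omega⟩ * x c
  map_add' β γ := by
    funext r
    simp [add_mul, Finset.sum_add_distrib]
  map_smul' a β := by
    funext r
    simp [Finset.mul_sum, mul_assoc]

lemma phi_single {k : ℕ} (x : Fin k → ZMod 2) (i : Fin (k + 1)) (r : Fin 2) :
    phiL k x (Pi.single i 1) r =
      if h : r.val ≤ i.val ∧ i.val < k + r.val then x ⟨i.val - r.val, by omega⟩ else 0 := by
  classical
  have hstep : phiL k x (Pi.single i 1) r =
      ∑ c : Fin k, if (⟨r.val + c.val, by have := r.isLt; have := c.isLt; omega⟩ : Fin (k+1)) = i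
        then x c else 0 := by
    show (∑ c : Fin k,
        (Pi.single i 1 : Fin (k+1) → ZMod 2)
          ⟨r.val + c.val, by have := r.isLt; have := c.isLt; omega⟩ * x c)
      = _
    refine Finset.sum_congr rfl fun c _ => ?_
    rw [Pi.single_apply]
    split <;> simp
  rw [hstep]
  by_cases h : r.val ≤ i.val ∧ i.val < k + r.val
  · rw [dif_pos h]
    rw [Finset.sum_eq_single (⟨i.val - r.val, by omega⟩ : Fin k)]
    · rw [if_pos (by apply Fin.ext; simp; omega)]
    · intro b _ hb
      rw [if_neg]
      intro hbe
      apply hb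
      have hv : r.val + b.val = i.val := congrArg Fin.val hbe
      apply Fin.ext
      simp
      omega
    · intro hmem; exact absurd (Finset.mem_univ _) hmem
  · rw [dif_neg h]
    apply Finset.sum_eq_zero
    intro c _
    rw [if_neg]
    intro hce
    have hv : r.val + c.val = i.val := congrArg Fin.val hce
    have := c.isLt
    omega

lemma phi_surj {k : ℕ} (x : Fin k → ZMod 2) (hx : x ≠ 0) :
    Function.Surjective (phiL k x) := by
  classical
  have hex : ∃ c : Fin k, x c ≠ 0 := by
    by_contra h
    push_neg at h
    exact hx (funext fun c => h c)
  set s : Finset (Fin k) := Finset.univ.filter (fun c => x c ≠ 0) with hsdef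
  have hs : s.Nonempty := ⟨hex.choose, by simp [hsdef, hex.choose_spec]⟩
  set c0 := s.min' hs with hc0
  have hc0mem : x c0 ≠ 0 := by
    have := s.min'_mem hs
    simp [hsdef] at this
    exact this
  have hone : ∀ a : ZMod 2, a ≠ 0 → a = 1 := by decide
  have hxc0 : x c0 = 1 := hone _ hc0mem
  have hmin : ∀ c : Fin k, c.val < c0.val → x c = 0 := by
    intro c hc
    by_contra hne
    have hmem : c ∈ s := by simp [hsdef, hne]
    have hle := s.min'_le c hmem
    rw [← hc0] at hle
    exact absurd hc (not_lt.mpr hle)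
  have hc0lt := c0.isLt
  set sv : ZMod 2 := if h : c0.val + 1 < k then x ⟨c0.val + 1, h⟩ else 0 with hsv
  -- values of phi at the two basis vectors
  have hA0 : phiL k x (Pi.single (⟨c0.val, by omega⟩ : Fin (k+1)) 1) ⟨0, by omega⟩ = 1 := by
    rw [phi_single, dif_pos (by simp)]
    exact (congrArg x (Fin.ext (by simp))).trans hxc0
  have hA1 : phiL k x (Pi.single (⟨c0.val, by omega⟩ : Fin (k+1)) 1) ⟨1, by omega⟩ = 0 := by
    rw [phi_single]
    split
    · rename_i h
      simp only [Fin.val_mk] at h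
      apply hmin
      simp only [Fin.val_mk]
      omega
    · rfl
  have hB0 : phiL k x (Pi.single (⟨c0.val + 1, by omega⟩ : Fin (k+1)) 1) ⟨0, by omega⟩ = sv := by
    rw [phi_single, hsv]
    by_cases h : c0.val + 1 < k
    · rw [dif_pos (by refine ⟨by simp, by simpa using h⟩), dif_pos h]
      exact congrArg x (Fin.ext (by simp))
    · rw [dif_neg (by simp only [Fin.val_mk]; omega), dif_neg h]
  have hB1 : phiL k x (Pi.single (⟨c0.val + 1, by omega⟩ : Fin (k+1)) 1) ⟨1, by omega⟩ = 1 := by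
    rw [phi_single, dif_pos (by simp)]
    exact (congrArg x (Fin.ext (by simp))).trans hxc0
  intro t
  refine ⟨(t 0 + t 1 * sv) • (Pi.single (⟨c0.val, by omega⟩ : Fin (k+1)) 1 :
        Fin (k+1) → ZMod 2)
      + t 1 • (Pi.single (⟨c0.val + 1, by omega⟩ : Fin (k+1)) 1 : Fin (k+1) → ZMod 2), ?_⟩
  rw [map_add, map_smul, map_smul]
  funext r
  have h2 : (2 : ZMod 2) = 0 := by decide
  simp only [Fin.mk_zero, Fin.mk_one] at hA0 hA1 hB0 hB1
  fin_cases r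
  · simp only [Fin.mk_zero, Pi.add_apply, Pi.smul_apply, smul_eq_mul]
    rw [hA0, hB0]
    linear_combination t 1 * sv * h2
  · simp only [Fin.mk_one, Pi.add_apply, Pi.smul_apply, smul_eq_mul]
    rw [hA1, hB1]
    ring

lemma card_phi_ker {k : ℕ} (hk : 1 ≤ k) (x : Fin k → ZMod 2) (hx : x ≠ 0) :
    Nat.card {β : Fin (k + 1) → ZMod 2 // phiL k x β = 0} = 2 ^ (k - 1) := by
  classical
  have hsurj := phi_surj x hx
  have hcongr : Nat.card {β : Fin (k + 1) → ZMod 2 // phiL k x β = 0}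
      = Nat.card (LinearMap.ker (phiL k x)) :=
    Nat.card_congr (Equiv.subtypeEquivRight (fun β => by simp [LinearMap.mem_ker]))
  rw [hcongr, Nat.card_eq_fintype_card, card_eq_pow_finrank (K := ZMod 2), ZMod.card]
  congr 1
  have h1 : finrank (ZMod 2) (LinearMap.range (phiL k x))
      + finrank (ZMod 2) (LinearMap.ker (phiL k x)) = k + 1 := by
    rw [LinearMap.finrank_range_add_finrank_ker]
    simp [Module.finrank_pi]
  have h2 : finrank (ZMod 2) (LinearMap.range (phiL k x)) = 2 := by
    rw [LinearMap.range_eq_top.mpr hsurj, finrank_top]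
    simp [Module.finrank_pi]
  omega

lemma rank_add_ker (n k : ℕ) (A : Matrix (Fin n × Fin 2) (Fin k) (ZMod 2)) :
    A.rank + finrank (ZMod 2) (LinearMap.ker A.mulVecLin) = k := by
  rw [Matrix.rank, LinearMap.finrank_range_add_finrank_ker]
  simp [Module.finrank_pi]

lemma card_ker_A (n k : ℕ) (A : Matrix (Fin n × Fin 2) (Fin k) (ZMod 2)) :
    Nat.card {x : Fin k → ZMod 2 // A.mulVec x = 0}
      = 2 ^ finrank (ZMod 2) (LinearMap.ker A.mulVecLin) := by
  classical
  have hcongr : Nat.card {x : Fin k → ZMod 2 // A.mulVec x = 0}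
      = Nat.card (LinearMap.ker A.mulVecLin) :=
    Nat.card_congr (Equiv.subtypeEquivRight (fun v => by
      simp [LinearMap.mem_ker, Matrix.mulVecLin_apply]))
  rw [hcongr, Nat.card_eq_fintype_card, card_eq_pow_finrank (K := ZMod 2), ZMod.card]

lemma filter_alpha_card (n k : ℕ) (hk : 1 ≤ k) (x : Fin k → ZMod 2) (hx : x ≠ 0) :
    (Finset.univ.filter
        fun α : Fin n → Fin (k + 1) → ZMod 2 => (persymD n k α).mulVec x = 0).card
      = (2 ^ (k - 1)) ^ n := by
  classical
  have hcond : ∀ α : Fin n → Fin (k + 1) → ZMod 2,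
      ((persymD n k α).mulVec x = 0 ↔ ∀ j, phiL k x (α j) = 0) := by
    intro α
    constructor
    · intro h j
      funext r
      exact congrFun h (j, r)
    · intro h
      funext p
      exact congrFun (h p.1) p.2
  rw [Finset.filter_congr (fun α _ => by
    simp only [hcond] : ∀ α ∈ Finset.univ, ((persymD n k α).mulVec x = 0 ↔ ∀ j, phiL k x (α j) = 0))]
  rw [← Fintype.card_subtype]
  rw [Fintype.card_congr (Equiv.subtypePiEquivPi
    (p := fun _ (β : Fin (k+1) → ZMod 2) => phiL k x β = 0))]
  rw [Fintype.card_fun]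
  congr 1
  · rw [← Nat.card_eq_fintype_card]
    exact card_phi_ker hk x hx
  · exact Fintype.card_fin n

lemma S_eq (n k : ℕ) (hk : 1 ≤ k) :
    ∑ α : Fin n → Fin (k + 1) → ZMod 2,
        (Finset.univ.filter fun x : Fin k → ZMod 2 => (persymD n k α).mulVec x = 0).card
      = 2 ^ ((k + 1) * n) + (2 ^ k - 1) * (2 ^ (k - 1)) ^ n := by
  classical
  have hswap : ∑ α : Fin n → Fin (k + 1) → ZMod 2,
      (Finset.univ.filter fun x : Fin k → ZMod 2 => (persymD n k α).mulVec x = 0).card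
      = ∑ x : Fin k → ZMod 2,
        (Finset.univ.filter
          fun α : Fin n → Fin (k + 1) → ZMod 2 => (persymD n k α).mulVec x = 0).card := by
    simp_rw [Finset.card_filter]
    exact Finset.sum_comm
  rw [hswap]
  rw [← Finset.sum_erase_add _ _ (Finset.mem_univ (0 : Fin k → ZMod 2))]
  have h0 : (Finset.univ.filter
      fun α : Fin n → Fin (k + 1) → ZMod 2 => (persymD n k α).mulVec 0 = 0).card
      = 2 ^ ((k + 1) * n) := by
    rw [Finset.filter_true_of_mem (fun α _ => Matrix.mulVec_zero _)]
    rw [Finset.card_univ, Fintype.card_fun, Fintype.card_fun, Fintype.card_fin,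
      Fintype.card_fin, ZMod.card, ← pow_mul]
  have hrest : ∑ x ∈ Finset.univ.erase (0 : Fin k → ZMod 2),
      (Finset.univ.filter
        fun α : Fin n → Fin (k + 1) → ZMod 2 => (persymD n k α).mulVec x = 0).card
      = (2 ^ k - 1) * (2 ^ (k - 1)) ^ n := by
    rw [Finset.sum_congr rfl (fun x hxmem => filter_alpha_card n k hk x (Finset.ne_of_mem_erase hxmem))]
    rw [Finset.sum_const, Finset.card_erase_of_mem (Finset.mem_univ _), Finset.card_univ,
      Fintype.card_fun, Fintype.card_fin, ZMod.card, smul_eq_mul]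
  rw [h0, hrest]
  ring

theorem gamma_weighted_sum_one (n k : ℕ) (hn : 1 ≤ n) (hk : 1 ≤ k) :
    ∑ i ∈ Finset.range (min (2 * n) k + 1), (Gamma n k i : ℚ) * (2 : ℚ) ^ (-(i : ℤ)) =
      (2 : ℚ) ^ ((n : ℤ) + (k : ℤ) * ((n : ℤ) - 1))
        + (2 : ℚ) ^ (((k : ℤ) - 1) * (n : ℤ))
        - (2 : ℚ) ^ (((k : ℤ) - 1) * (n : ℤ)) * (2 : ℚ) ^ (-(k : ℤ)) := by
  classical
  -- Step A : the weighted sum equals the sum over all α of 2^{-rank}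
  have hmaps : ∀ α : Fin n → Fin (k + 1) → ZMod 2, α ∈ Finset.univ →
      (persymD n k α).rank ∈ Finset.range (min (2 * n) k + 1) := by
    intro α _
    rw [Finset.mem_range, Nat.lt_succ_iff]
    refine le_min ?_ ?_
    · have := (persymD n k α).rank_le_card_height
      simp only [Fintype.card_prod, Fintype.card_fin] at this
      omega
    · have := (persymD n k α).rank_le_card_width
      simpa using this
  have hA : ∑ i ∈ Finset.range (min (2 * n) k + 1), (Gamma n k i : ℚ) * (2 : ℚ) ^ (-(i : ℤ))
      = ∑ α : Fin n → Fin (k + 1) → ZMod 2, (2 : ℚ) ^ (-(((persymD n k α).rank : ℕ) : ℤ)) := by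
    rw [← Finset.sum_fiberwise_of_maps_to hmaps
      (fun α => (2 : ℚ) ^ (-(((persymD n k α).rank : ℕ) : ℤ)))]
    refine Finset.sum_congr rfl fun i _ => ?_
    have : ∀ α ∈ Finset.univ.filter
        (fun α : Fin n → Fin (k + 1) → ZMod 2 => (persymD n k α).rank = i),
        (2 : ℚ) ^ (-(((persymD n k α).rank : ℕ) : ℤ)) = (2 : ℚ) ^ (-(i : ℤ)) := by
      intro α hα
      rw [Finset.mem_filter] at hα
      rw [hα.2]
    rw [Finset.sum_congr rfl this, Finset.sum_const, nsmul_eq_mul]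
    congr 1
    rw [Gamma, Nat.card_eq_fintype_card, Fintype.card_subtype]
  rw [hA]
  -- Step B : per α, 2^{-rank} = (number of kernel vectors) * 2^{-k}
  have hB : ∀ α : Fin n → Fin (k + 1) → ZMod 2,
      (2 : ℚ) ^ (-(((persymD n k α).rank : ℕ) : ℤ))
        = ((Finset.univ.filter
            fun x : Fin k → ZMod 2 => (persymD n k α).mulVec x = 0).card : ℚ)
          * (2 : ℚ) ^ (-(k : ℤ)) := by
    intro α
    set A := persymD n k α
    set d := finrank (ZMod 2) (LinearMap.ker A.mulVecLin) with hd
    have hrk := rank_add_ker n k A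
    have hcard : (Finset.univ.filter
        fun x : Fin k → ZMod 2 => A.mulVec x = 0).card = 2 ^ d := by
      rw [← Fintype.card_subtype, ← Nat.card_eq_fintype_card]
      exact card_ker_A n k A
    rw [hcard]
    have hexp : (-((A.rank : ℕ) : ℤ)) = (d : ℤ) + (-(k : ℤ)) := by omega
    rw [hexp, zpow_add₀ (by norm_num : (2:ℚ) ≠ 0)]
    congr 1
    rw [zpow_natCast]
    push_cast
    ring
  rw [Finset.sum_congr rfl (fun α _ => hB α), ← Finset.sum_mul, ← Nat.cast_sum]
  rw [S_eq n k hk]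
  -- final arithmetic
  have h2 : (2 : ℚ) ≠ 0 := by norm_num
  have h1 : ((2 ^ ((k + 1) * n) + (2 ^ k - 1) * (2 ^ (k - 1)) ^ n : ℕ) : ℚ)
      = (2 : ℚ) ^ ((k + 1) * n) + ((2 : ℚ) ^ k - 1) * (2 : ℚ) ^ ((k - 1) * n) := by
    push_cast [Nat.cast_sub (Nat.one_le_two_pow)]
    rw [← pow_mul]
  have hz : ∀ m : ℕ, (2 : ℚ) ^ m = (2 : ℚ) ^ (m : ℤ) := fun m => (zpow_natCast 2 m).symm
  rw [h1, hz ((k + 1) * n), hz k, hz ((k - 1) * n)]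
  rw [add_mul, ← zpow_add₀ h2]
  have he1 : ((((k + 1) * n : ℕ)) : ℤ) + (-(k : ℤ)) = (n : ℤ) + (k : ℤ) * ((n : ℤ) - 1) := by
    push_cast
    ring
  have he2 : (((k - 1) * n : ℕ) : ℤ) = ((k : ℤ) - 1) * (n : ℤ) := by
    push_cast [Nat.cast_sub hk]
    ring
  rw [he1, he2]
  have hkk : (2 : ℚ) ^ ((k : ℕ) : ℤ) * (2 : ℚ) ^ (-(k : ℤ)) = 1 := by
    rw [← zpow_add₀ h2]
    simp
  linear_combination (2 : ℚ) ^ (((k : ℤ) - 1) * (n : ℤ)) * hkk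
end
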